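/- Let h_1,…,h_N be Hermitian d×d complex matrices with H = ∑_l h_l and λ = ∑_l ‖h_l‖ > 0. Let t > 0, ε ∈ (0,1], m ≥ 1, and let k_1,…,k_m be pairwise distinct positive integers with reals a_1,…,a_m solving the Vandermonde system ∑_j a_j k_j^{-2(i-1)} = δ_{i,1} for i ∈ {1,…,m}. If r is a positive integer with r ≥ tλ · max{ (8tλ·(∑_j|a_j|)/(ε·(2m+1)!))^{1/(2m)}, 1/log 2 }, then ‖( ∑_{j=1}^m a_j · U_2(t/(r k_j))^{k_j} )^r − exp(−itH)‖ ≤ ε. -/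

import Mathlib

set_option linter.unusedSectionVars false
set_option maxHeartbeats 1600000
namespace MPF
open PowerSeries Finset

variable {A : Type*} [Ring A] [Algebra ℂ A]

/-- scalar helper -/
lemma inv_fact_mul_inv_fact {i j n : ℕ} (h : i + j = n) :
    ((i.factorial : ℂ))⁻¹ * ((j.factorial : ℂ))⁻¹ = (n.choose i : ℂ) * ((n.factorial : ℂ))⁻¹ := by
  have hin : i ≤ n := by omega
  have h1 : (n.choose i : ℂ) * (i.factorial : ℂ) * ((n - i).factorial : ℂ) = (n.factorial : ℂ) := by
    exact_mod_cast congrArg (Nat.cast : ℕ → ℂ) (Nat.choose_mul_factorial_mul_factorial hin)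
  have hj : n - i = j := by omega
  rw [hj] at h1
  have h2 : (i.factorial : ℂ) ≠ 0 := Nat.cast_ne_zero.mpr i.factorial_ne_zero
  have h3 : (j.factorial : ℂ) ≠ 0 := Nat.cast_ne_zero.mpr j.factorial_ne_zero
  have h4 : (n.factorial : ℂ) ≠ 0 := Nat.cast_ne_zero.mpr n.factorial_ne_zero
  field_simp
  linear_combination -h1

/-- mul of smul in an algebra -/
lemma smul_mul_smul' (x y : ℂ) (a b : A) : (x • a) * (y • b) = (x * y) • (a * b) := by
  rw [Algebra.smul_mul_assoc, Algebra.mul_smul_comm, smul_smul]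

/-- The exponential power series of `a`. -/
noncomputable def Eser (a : A) : PowerSeries A :=
  PowerSeries.mk fun n => ((n.factorial : ℂ))⁻¹ • a ^ n

@[simp] lemma coeff_Eser (a : A) (n : ℕ) :
    coeff n (Eser a) = ((n.factorial : ℂ))⁻¹ • a ^ n := coeff_mk _ _

@[simp] lemma constantCoeff_Eser (a : A) : constantCoeff (Eser a) = 1 := by
  rw [← coeff_zero_eq_constantCoeff_apply, coeff_Eser]; simp

lemma Eser_zero : Eser (0 : A) = 1 := by
  ext n
  rw [coeff_Eser, PowerSeries.coeff_one]
  rcases Nat.eq_zero_or_pos n with h | h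
  · subst h; simp
  · rw [if_neg h.ne', zero_pow h.ne', smul_zero]

lemma Eser_mul_Eser {a b : A} (hab : Commute a b) : Eser a * Eser b = Eser (a + b) := by
  ext n
  rw [coeff_mul, coeff_Eser, hab.add_pow n, Finset.smul_sum,
    Finset.Nat.sum_antidiagonal_eq_sum_range_succ_mk]
  apply Finset.sum_congr rfl
  intro i hi
  have hin : i ≤ n := Nat.lt_succ_iff.mp (Finset.mem_range.mp hi)
  rw [coeff_Eser, coeff_Eser, smul_mul_smul' _ _ _ _,
    inv_fact_mul_inv_fact (Nat.add_sub_cancel' hin)]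
  have h5 : a ^ i * b ^ (n - i) * ((n.choose i : ℕ) : A) =
      ((n.choose i : ℕ) : A) * (a ^ i * b ^ (n - i)) := (Nat.cast_commute _ _).symm.eq
  rw [h5, mul_comm ((n.choose i : ℕ) : ℂ) _, mul_smul, Nat.cast_smul_eq_nsmul ℂ, nsmul_eq_mul]

lemma Eser_neg_mul (a : A) : Eser (-a) * Eser a = 1 := by
  rw [Eser_mul_Eser (Commute.neg_left rfl), neg_add_cancel, Eser_zero]

lemma Eser_mul_neg (a : A) : Eser a * Eser (-a) = 1 := by
  rw [Eser_mul_Eser (Commute.neg_right rfl), add_neg_cancel, Eser_zero]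

/-- coefficients of powers of a series with zero constant coefficient vanish below the power -/
lemma coeff_pow_eq_zero {f : PowerSeries A} (hf : constantCoeff f = 0) :
    ∀ {ℓ n : ℕ}, n < ℓ → coeff n (f ^ ℓ) = 0 := by
  intro ℓ
  induction ℓ with
  | zero => intro n hn; omega
  | succ ℓ ih =>
      intro n hn
      rw [pow_succ, coeff_mul]
      apply Finset.sum_eq_zero
      rintro ⟨i, j⟩ hij
      rw [Finset.HasAntidiagonal.mem_antidiagonal] at hij
      rcases Nat.eq_zero_or_pos j with hj | hj
      · subst hj
        rw [coeff_zero_eq_constantCoeff, hf, mul_zero]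
      · have : i < ℓ := by omega
        rw [ih this, zero_mul]

lemma coeff_pow_congr_aux {f f' : PowerSeries A} {n : ℕ}
    (hag : ∀ i < n, coeff i f = coeff i f') :
    ∀ ℓ, 1 ≤ ℓ → ∀ j < n, coeff j (f ^ ℓ) = coeff j (f' ^ ℓ) := by
  intro ℓ
  induction ℓ with
  | zero => omega
  | succ ℓ ih =>
      intro _ j hj
      rcases Nat.eq_zero_or_pos ℓ with h0 | h0
      · subst h0; simpa using hag j hj
      · rw [pow_succ, pow_succ, coeff_mul, coeff_mul]
        apply Finset.sum_congr rfl
        rintro ⟨i1, i2⟩ hi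
        rw [Finset.HasAntidiagonal.mem_antidiagonal] at hi
        have h1 : i1 < n := by omega
        have h2 : i2 < n := by omega
        rw [ih h0 i1 h1, hag i2 h2]

lemma coeff_pow_congr {f f' : PowerSeries A} {n : ℕ}
    (hf : constantCoeff f = 0) (hf' : constantCoeff f' = 0)
    (hag : ∀ i < n, coeff i f = coeff i f') {ℓ : ℕ} (hℓ : 2 ≤ ℓ) :
    coeff n (f ^ ℓ) = coeff n (f' ^ ℓ) := by
  have hl1 : 1 ≤ ℓ - 1 := by omega
  have hts : f ^ ℓ = f ^ (ℓ - 1) * f := by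
    rw [← pow_succ]; congr 1; omega
  have hts' : f' ^ ℓ = f' ^ (ℓ - 1) * f' := by
    rw [← pow_succ]; congr 1; omega
  rw [hts, hts', coeff_mul, coeff_mul]
  apply Finset.sum_congr rfl
  rintro ⟨i1, i2⟩ hi
  rw [Finset.HasAntidiagonal.mem_antidiagonal] at hi
  rcases Nat.eq_zero_or_pos i2 with h2 | h2
  · subst h2
    rw [coeff_zero_eq_constantCoeff, hf, hf', mul_zero, mul_zero]
  · rcases Nat.eq_zero_or_pos i1 with h1 | h1
    · subst h1
      rw [coeff_zero_eq_constantCoeff]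
      have e1 : constantCoeff (f ^ (ℓ - 1)) = 0 := by
        rw [← coeff_zero_eq_constantCoeff_apply]
        exact coeff_pow_eq_zero hf (by omega)
      have e1' : constantCoeff (f' ^ (ℓ - 1)) = 0 := by
        rw [← coeff_zero_eq_constantCoeff_apply]
        exact coeff_pow_eq_zero hf' (by omega)
      rw [e1, e1', zero_mul, zero_mul]
    · have hi1 : i1 < n := by omega
      have hi2 : i2 < n := by omega
      rw [coeff_pow_congr_aux hag (ℓ - 1) hl1 i1 hi1, hag i2 hi2]

/-- substitution of a scalar power series applied to (powers of) a fixed series `f` -/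
noncomputable def Phi (f : PowerSeries A) (p : PowerSeries ℂ) : PowerSeries A :=
  PowerSeries.mk fun n => ∑ ℓ ∈ range (n + 1), (coeff ℓ p) • coeff n (f ^ ℓ)

lemma coeff_Phi (f : PowerSeries A) (p : PowerSeries ℂ) (n : ℕ) :
    coeff n (Phi f p) = ∑ ℓ ∈ range (n + 1), (coeff ℓ p) • coeff n (f ^ ℓ) := coeff_mk _ _

lemma coeff_Phi_ext {f : PowerSeries A} (hf : constantCoeff f = 0) (p : PowerSeries ℂ)
    {n N : ℕ} (hN : n ≤ N) :
    coeff n (Phi f p) = ∑ ℓ ∈ range (N + 1), (coeff ℓ p) • coeff n (f ^ ℓ) := by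
  rw [coeff_Phi]
  apply Finset.sum_subset
  · exact Finset.range_subset_range.mpr (by omega)
  · intro ℓ _ hℓ
    rw [Finset.mem_range] at hℓ
    rw [coeff_pow_eq_zero hf (by omega), smul_zero]

lemma Phi_one (f : PowerSeries A) : Phi f 1 = 1 := by
  ext n
  rw [coeff_Phi]
  have : ∀ ℓ ∈ range (n + 1), (coeff ℓ (1 : PowerSeries ℂ)) • coeff n (f ^ ℓ)
      = if ℓ = 0 then coeff n (1 : PowerSeries A) else 0 := by
    intro ℓ _
    rw [PowerSeries.coeff_one]
    split
    · subst ‹ℓ = 0›; simp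
    · rw [zero_smul]
  rw [Finset.sum_congr rfl this, Finset.sum_ite_eq' (range (n+1)) 0]
  simp

lemma Phi_mul {f : PowerSeries A} (hf : constantCoeff f = 0) (p q : PowerSeries ℂ) :
    Phi f (p * q) = Phi f p * Phi f q := by
  classical
  ext n
  set g : ℕ × ℕ → A := fun ab =>
    (coeff ab.1 p * coeff ab.2 q) • coeff n (f ^ (ab.1 + ab.2)) with hg
  have hgz : ∀ ab : ℕ × ℕ, n < ab.1 + ab.2 → g ab = 0 := by
    intro ab hab
    rw [hg]
    simp only
    rw [coeff_pow_eq_zero hf hab, smul_zero]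
  -- LHS
  have hL : coeff n (Phi f (p * q)) = ∑ L ∈ range (n + 1), ∑ ab ∈ antidiagonal L, g ab := by
    rw [coeff_Phi]
    apply Finset.sum_congr rfl
    intro L _
    rw [PowerSeries.coeff_mul, Finset.sum_smul]
    apply Finset.sum_congr rfl
    intro ab hab
    rw [Finset.HasAntidiagonal.mem_antidiagonal] at hab
    rw [hg]; simp only; rw [hab]
  -- combine into the square
  have hd : (↑(range (n + 1)) : Set ℕ).PairwiseDisjoint (fun L => antidiagonal L) := by
    intro x _ y _ hxy
    simp only [Function.onFun]
    rw [Finset.disjoint_left]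
    intro ab hx hy
    rw [Finset.HasAntidiagonal.mem_antidiagonal] at hx hy
    exact hxy (hx ▸ hy.symm ▸ rfl)
  have hsq : ∑ L ∈ range (n + 1), ∑ ab ∈ antidiagonal L, g ab
      = ∑ ab ∈ (range (n + 1)) ×ˢ (range (n + 1)), g ab := by
    rw [← Finset.sum_biUnion hd]
    apply Finset.sum_subset
    · intro ab hab
      rw [Finset.mem_biUnion] at hab
      obtain ⟨L, hL1, hL2⟩ := hab
      rw [Finset.HasAntidiagonal.mem_antidiagonal] at hL2
      rw [Finset.mem_range] at hL1
      rw [Finset.mem_product, Finset.mem_range, Finset.mem_range]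
      omega
    · intro ab hab hnab
      apply hgz
      by_contra hc
      push_neg at hc
      apply hnab
      rw [Finset.mem_biUnion]
      exact ⟨ab.1 + ab.2, Finset.mem_range.mpr (by omega), Finset.HasAntidiagonal.mem_antidiagonal.mpr rfl⟩
  -- RHS
  have hR : coeff n (Phi f p * Phi f q) = ∑ ab ∈ (range (n + 1)) ×ˢ (range (n + 1)), g ab := by
    rw [PowerSeries.coeff_mul]
    have hstep : ∀ pr : ℕ × ℕ, pr ∈ antidiagonal n →
        coeff pr.1 (Phi f p) * coeff pr.2 (Phi f q)
        = ∑ ab ∈ (range (n + 1)) ×ˢ (range (n + 1)),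
            (coeff ab.1 p * coeff ab.2 q) • (coeff pr.1 (f ^ ab.1) * coeff pr.2 (f ^ ab.2)) := by
      intro pr hpr
      rw [Finset.HasAntidiagonal.mem_antidiagonal] at hpr
      rw [coeff_Phi_ext hf p (show pr.1 ≤ n by omega), coeff_Phi_ext hf q (show pr.2 ≤ n by omega),
        Finset.sum_mul_sum, ← Finset.sum_product']
      apply Finset.sum_congr rfl
      intro ab _
      rw [smul_mul_smul' _ _ _ _]
    rw [Finset.sum_congr rfl hstep, Finset.sum_comm]
    apply Finset.sum_congr rfl
    intro ab _
    rw [hg]; simp only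
    rw [pow_add, PowerSeries.coeff_mul, Finset.smul_sum]
  rw [hL, hsq, hR]

lemma Phi_pow {f : PowerSeries A} (hf : constantCoeff f = 0) (p : PowerSeries ℂ) (k : ℕ) :
    Phi f (p ^ k) = (Phi f p) ^ k := by
  induction k with
  | zero => rw [pow_zero, pow_zero, Phi_one]
  | succ k ih => rw [pow_succ, pow_succ, Phi_mul hf, ih]

/-- The formal exponential of a power series. -/
noncomputable def mexp (f : PowerSeries A) : PowerSeries A := Phi f (PowerSeries.exp ℂ)

lemma ratCast_fact (ℓ : ℕ) : (algebraMap ℚ ℂ) (1 / (ℓ.factorial : ℚ)) = ((ℓ.factorial : ℂ))⁻¹ := by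
  rw [eq_ratCast (algebraMap ℚ ℂ)]
  push_cast
  rw [one_div]

lemma coeff_mexp (f : PowerSeries A) (n : ℕ) :
    coeff n (mexp f) = ∑ ℓ ∈ range (n + 1), ((ℓ.factorial : ℂ))⁻¹ • coeff n (f ^ ℓ) := by
  rw [mexp, coeff_Phi]
  apply Finset.sum_congr rfl
  intro ℓ _
  rw [PowerSeries.coeff_exp, ratCast_fact]

lemma coeff_mexp_ext {f : PowerSeries A} (hf : constantCoeff f = 0) {n N : ℕ} (hN : n ≤ N) :
    coeff n (mexp f) = ∑ ℓ ∈ range (N + 1), ((ℓ.factorial : ℂ))⁻¹ • coeff n (f ^ ℓ) := by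
  rw [mexp, coeff_Phi_ext hf _ hN]
  apply Finset.sum_congr rfl
  intro ℓ _
  rw [PowerSeries.coeff_exp, ratCast_fact]

lemma coeff_zero_mexp (f : PowerSeries A) : coeff 0 (mexp f) = 1 := by
  rw [coeff_mexp]
  simp

lemma constantCoeff_mexp (f : PowerSeries A) : constantCoeff (mexp f) = 1 := by
  rw [← coeff_zero_eq_constantCoeff_apply, coeff_zero_mexp]

lemma mexp_inj {f f' : PowerSeries A} (hf : constantCoeff f = 0)
    (hf' : constantCoeff f' = 0) (h : mexp f = mexp f') : f = f' := by
  have key : ∀ n, (∀ i, i < n → coeff i f = coeff i f') → coeff n f = coeff n f' := by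
    intro n ih
    rcases Nat.eq_zero_or_pos n with h0 | h0
    · subst h0
      rw [coeff_zero_eq_constantCoeff, hf, hf']
    · have hco := congrArg (coeff n) h
      rw [coeff_mexp, coeff_mexp, ← sub_eq_zero, ← Finset.sum_sub_distrib] at hco
      have hterm : ∀ ℓ ∈ range (n + 1),
          ((ℓ.factorial : ℂ))⁻¹ • coeff n (f ^ ℓ) - ((ℓ.factorial : ℂ))⁻¹ • coeff n (f' ^ ℓ)
          = if ℓ = 1 then coeff n f - coeff n f' else 0 := by
        intro ℓ _
        rcases Nat.lt_or_ge ℓ 2 with hℓ | hℓ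
        · interval_cases ℓ
          · simp
          · simp
        · rw [if_neg (by omega), coeff_pow_congr hf hf' ih hℓ, sub_self]
      rw [Finset.sum_congr rfl hterm, Finset.sum_ite_eq' (range (n + 1)) 1] at hco
      rw [if_pos (Finset.mem_range.mpr (by omega))] at hco
      exact sub_eq_zero.mp hco
  ext n
  induction n using Nat.strong_induction_on with
  | _ n ih => exact key n ih

/-! ### mexp congruence and perturbation -/

lemma coeff_mexp_congr {f f' : PowerSeries A} (hf : constantCoeff f = 0)
    (hf' : constantCoeff f' = 0) {n : ℕ} (hag : ∀ i ≤ n, coeff i f = coeff i f') :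
    coeff n (mexp f) = coeff n (mexp f') := by
  rw [coeff_mexp, coeff_mexp]
  apply Finset.sum_congr rfl
  intro ℓ _
  congr 1
  rcases Nat.lt_or_ge ℓ 2 with hℓ | hℓ
  · interval_cases ℓ
    · rfl
    · rw [pow_one, pow_one]; exact hag n le_rfl
  · exact coeff_pow_congr hf hf' (fun i hi => hag i (le_of_lt hi)) hℓ

lemma coeff_mexp_add_monomial {f : PowerSeries A} (hf : constantCoeff f = 0) {q : ℕ}
    (hq : 1 ≤ q) (c : A) :
    coeff q (mexp (f + PowerSeries.monomial q c)) = coeff q (mexp f) + c := by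
  have hM0 : constantCoeff (PowerSeries.monomial q c) = 0 := by
    rw [← coeff_zero_eq_constantCoeff_apply, PowerSeries.coeff_monomial, if_neg (by omega)]
  have hfm : constantCoeff (f + PowerSeries.monomial q c) = 0 := by
    rw [map_add, hf, hM0, add_zero]
  rw [coeff_mexp, coeff_mexp]
  have hterm : ∀ ℓ ∈ range (q + 1),
      ((ℓ.factorial : ℂ))⁻¹ • coeff q ((f + PowerSeries.monomial q c) ^ ℓ)
      = ((ℓ.factorial : ℂ))⁻¹ • coeff q (f ^ ℓ) + (if ℓ = 1 then c else 0) := by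
    intro ℓ _
    rcases Nat.lt_or_ge ℓ 2 with hℓ | hℓ
    · interval_cases ℓ
      · simp
      · rw [if_pos rfl, pow_one, pow_one, map_add, PowerSeries.coeff_monomial, if_pos rfl]
        simp [smul_add]
    · rw [if_neg (by omega), add_zero]
      congr 1
      apply coeff_pow_congr hfm hf _ hℓ
      intro i hi
      rw [map_add, PowerSeries.coeff_monomial, if_neg (by omega), add_zero]
  rw [Finset.sum_congr rfl hterm, Finset.sum_add_distrib,
    Finset.sum_ite_eq' (range (q + 1)) 1, if_pos (Finset.mem_range.mpr (by omega))]

/-! ### the formal logarithm -/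

noncomputable def logApprox (u : PowerSeries A) : ℕ → PowerSeries A
  | 0 => 0
  | n+1 => logApprox u n +
      PowerSeries.monomial (n+1) (coeff (n+1) u - coeff (n+1) (mexp (logApprox u n)))

lemma constantCoeff_logApprox (u : PowerSeries A) (n : ℕ) :
    constantCoeff (logApprox u n) = 0 := by
  induction n with
  | zero => simp [logApprox]
  | succ n ih =>
      rw [logApprox, map_add, ih, ← coeff_zero_eq_constantCoeff_apply,
        PowerSeries.coeff_monomial, if_neg (by omega), add_zero]

lemma coeff_logApprox_stable (u : PowerSeries A) {i n n' : ℕ} (h : i ≤ n) (h' : n ≤ n') :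
    coeff i (logApprox u n) = coeff i (logApprox u n') := by
  induction n', h' using Nat.le_induction with
  | base => rfl
  | succ n' hn' ih =>
      rw [ih, logApprox, map_add, PowerSeries.coeff_monomial, if_neg (by omega), add_zero]

noncomputable def mlog (u : PowerSeries A) : PowerSeries A :=
  PowerSeries.mk fun n => coeff n (logApprox u n)

lemma coeff_mlog (u : PowerSeries A) {i n : ℕ} (h : i ≤ n) :
    coeff i (mlog u) = coeff i (logApprox u n) := by
  rw [mlog, coeff_mk]
  exact coeff_logApprox_stable u le_rfl h

lemma constantCoeff_mlog (u : PowerSeries A) : constantCoeff (mlog u) = 0 := by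
  rw [← coeff_zero_eq_constantCoeff_apply, coeff_mlog u (le_refl 0)]
  simp [logApprox]

lemma coeff_mexp_logApprox (u : PowerSeries A) (hu : constantCoeff u = 1) :
    ∀ n, ∀ i ≤ n, coeff i (mexp (logApprox u n)) = coeff i u := by
  intro n
  induction n with
  | zero =>
      intro i hi
      interval_cases i
      rw [coeff_zero_mexp, coeff_zero_eq_constantCoeff, hu]
  | succ n ih =>
      intro i hi
      rcases Nat.lt_or_ge i (n+1) with h | h
      · have hi' : i ≤ n := by omega
        rw [← ih i hi']
        apply coeff_mexp_congr (constantCoeff_logApprox u (n+1)) (constantCoeff_logApprox u n)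
        intro j hj
        exact (coeff_logApprox_stable u (by omega) (by omega)).symm
      · have hi2 : i = n + 1 := by omega
        subst hi2
        rw [logApprox, coeff_mexp_add_monomial (constantCoeff_logApprox u n) (by omega)]
        rw [add_sub_cancel]

lemma mexp_mlog {u : PowerSeries A} (hu : constantCoeff u = 1) : mexp (mlog u) = u := by
  ext n
  have h1 : coeff n (mexp (mlog u)) = coeff n (mexp (logApprox u n)) :=
    coeff_mexp_congr (constantCoeff_mlog u) (constantCoeff_logApprox u n)
      (fun i hi => coeff_mlog u hi)
  rw [h1, coeff_mexp_logApprox u hu n n le_rfl]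

lemma coeff_one_mexp_zero : coeff 1 (mexp (0 : PowerSeries A)) = 0 := by
  rw [coeff_mexp]
  apply Finset.sum_eq_zero
  intro ℓ hℓ
  rw [Finset.mem_range] at hℓ
  interval_cases ℓ
  · simp
  · simp

lemma coeff_one_mlog (u : PowerSeries A) : coeff 1 (mlog u) = coeff 1 u := by
  rw [coeff_mlog u (le_refl 1)]
  show coeff 1 (logApprox u 1) = _
  rw [logApprox, logApprox, zero_add, PowerSeries.coeff_monomial, if_pos rfl,
    coeff_one_mexp_zero, sub_zero]

/-! ### sign involution -/

noncomputable def negX (f : PowerSeries A) : PowerSeries A :=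
  PowerSeries.mk fun n => ((-1 : ℂ)) ^ n • coeff n f

@[simp] lemma coeff_negX (f : PowerSeries A) (n : ℕ) :
    coeff n (negX f) = ((-1 : ℂ)) ^ n • coeff n f := coeff_mk _ _

lemma negX_one : negX (1 : PowerSeries A) = 1 := by
  ext n
  rw [coeff_negX, PowerSeries.coeff_one]
  rcases Nat.eq_zero_or_pos n with h | h
  · subst h; simp
  · simp [h.ne']

lemma negX_mul (f g : PowerSeries A) : negX (f * g) = negX f * negX g := by
  ext n
  rw [coeff_negX, PowerSeries.coeff_mul, PowerSeries.coeff_mul, Finset.smul_sum]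
  apply Finset.sum_congr rfl
  rintro ⟨i, j⟩ hij
  rw [Finset.HasAntidiagonal.mem_antidiagonal] at hij
  rw [coeff_negX, coeff_negX, smul_mul_smul' _ _ _ _, ← pow_add, hij]

lemma negX_pow (f : PowerSeries A) (ℓ : ℕ) : negX (f ^ ℓ) = (negX f) ^ ℓ := by
  induction ℓ with
  | zero => rw [pow_zero, pow_zero, negX_one]
  | succ ℓ ih => rw [pow_succ, pow_succ, negX_mul, ih]

lemma negX_Eser (a : A) : negX (Eser a) = Eser (-a) := by
  ext n
  rw [coeff_negX, coeff_Eser, coeff_Eser]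
  have hna : (-a) = (-1 : ℂ) • a := by rw [neg_smul, one_smul]
  rw [hna, smul_pow, smul_comm]

lemma negX_mexp (f : PowerSeries A) : negX (mexp f) = mexp (negX f) := by
  ext n
  rw [coeff_negX, coeff_mexp, coeff_mexp, Finset.smul_sum]
  apply Finset.sum_congr rfl
  intro ℓ _
  rw [← negX_pow, coeff_negX, smul_comm]

lemma negX_list_prod (L : List (PowerSeries A)) : negX L.prod = (L.map negX).prod := by
  induction L with
  | nil => exact negX_one
  | cons a L ih => rw [List.prod_cons, List.map_cons, List.prod_cons, negX_mul, ih]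

/-! ### parity and bottom coefficients of powers -/

lemma coeff_pow_odd_support {g : PowerSeries A} (hodd : ∀ i, Even i → coeff i g = 0) :
    ∀ ℓ n, ¬ Even (n + ℓ) → coeff n (g ^ ℓ) = 0 := by
  intro ℓ
  induction ℓ with
  | zero =>
      intro n hn
      rw [pow_zero, PowerSeries.coeff_one, if_neg]
      intro h0
      exact hn (by simp [h0])
  | succ ℓ ih =>
      intro n hn
      rw [pow_succ, PowerSeries.coeff_mul]
      apply Finset.sum_eq_zero
      rintro ⟨i, j⟩ hij
      rw [Finset.HasAntidiagonal.mem_antidiagonal] at hij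
      by_cases hie : Even (i + ℓ)
      · rcases Nat.even_or_odd j with hj | hj
        · rw [hodd j hj, mul_zero]
        · exfalso
          apply hn
          have heq : n + (ℓ + 1) = (i + ℓ) + (j + 1) := by omega
          rw [heq]
          exact hie.add hj.add_one
      · rw [ih i hie, zero_mul]

lemma coeff_pow_self {g : PowerSeries A} (hg : constantCoeff g = 0) :
    ∀ n, coeff n (g ^ n) = (coeff 1 g) ^ n := by
  intro n
  induction n with
  | zero => rw [pow_zero, pow_zero, PowerSeries.coeff_one, if_pos rfl]
  | succ n ih =>
      rw [pow_succ, PowerSeries.coeff_mul]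
      rw [Finset.sum_eq_single_of_mem (n, 1) (Finset.HasAntidiagonal.mem_antidiagonal.mpr rfl)]
      · rw [ih, pow_succ]
      · rintro ⟨i, j⟩ hij hne
        rw [Finset.HasAntidiagonal.mem_antidiagonal] at hij
        rcases Nat.lt_or_ge j 2 with hj | hj
        · interval_cases j
          · rw [coeff_zero_eq_constantCoeff, hg, mul_zero]
          · exfalso
            apply hne
            have hin : i = n := by omega
            rw [hin]
        · have : i < n := by omega
          rw [coeff_pow_eq_zero hg this, zero_mul]

/-! ### telescoping products -/

lemma ofFn_prod_mul_rev {M : Type*} [Monoid M] :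
    ∀ {n : ℕ} (f g : Fin n → M), (∀ i, f i * g i = 1) →
      (List.ofFn f).prod * (List.ofFn g).reverse.prod = 1 := by
  intro n
  induction n with
  | zero => intro f g h; simp
  | succ n ih =>
      intro f g h
      rw [List.ofFn_succ, List.ofFn_succ, List.prod_cons, List.reverse_cons, List.prod_append,
        List.prod_singleton]
      have key := ih (fun i => f i.succ) (fun i => g i.succ) (fun i => h i.succ)
      have key2 : (List.ofFn fun i => f (Fin.succ i)).prod *
          ((List.ofFn fun i => g (Fin.succ i)).reverse.prod * g 0) = g 0 := by
        rw [← mul_assoc, key, one_mul]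
      rw [mul_assoc, key2, h 0]

lemma rev_prod_mul_ofFn {M : Type*} [Monoid M] :
    ∀ {n : ℕ} (f g : Fin n → M), (∀ i, f i * g i = 1) →
      (List.ofFn f).reverse.prod * (List.ofFn g).prod = 1 := by
  intro n
  induction n with
  | zero => intro f g h; simp
  | succ n ih =>
      intro f g h
      rw [List.ofFn_succ, List.ofFn_succ, List.prod_cons, List.reverse_cons, List.prod_append,
        List.prod_singleton]
      have key := ih (fun i => f i.succ) (fun i => g i.succ) (fun i => h i.succ)
      rw [mul_assoc, ← mul_assoc (f 0), h 0, one_mul, key]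

/-! ### the symmetric product series -/

section USeries

variable {N : ℕ}

noncomputable def uSeries (c : Fin N → A) : PowerSeries A :=
  (List.ofFn fun l => Eser (c l)).prod * (List.ofFn fun l => Eser (c l)).reverse.prod

lemma constantCoeff_list_prod (L : List (PowerSeries A))
    (h : ∀ f ∈ L, constantCoeff f = 1) : constantCoeff L.prod = 1 := by
  induction L with
  | nil => simp
  | cons a L ih =>
      rw [List.prod_cons, map_mul, h a (List.mem_cons_self), one_mul]
      exact ih (fun f hf => h f (List.mem_cons_of_mem a hf))

lemma constantCoeff_uSeries (c : Fin N → A) : constantCoeff (uSeries c) = 1 := by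
  rw [uSeries, map_mul, constantCoeff_list_prod, constantCoeff_list_prod, one_mul]
  · intro f hf
    rw [List.mem_reverse, List.mem_ofFn] at hf
    obtain ⟨l, rfl⟩ := hf
    exact constantCoeff_Eser (c l)
  · intro f hf
    rw [List.mem_ofFn] at hf
    obtain ⟨l, rfl⟩ := hf
    exact constantCoeff_Eser (c l)

lemma coeff_one_mul_of_const_one {f g : PowerSeries A}
    (hf : constantCoeff f = 1) (hg : constantCoeff g = 1) :
    coeff 1 (f * g) = coeff 1 f + coeff 1 g := by
  rw [PowerSeries.coeff_mul, Finset.Nat.sum_antidiagonal_eq_sum_range_succ_mk,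
    Finset.sum_range_succ, Finset.sum_range_succ, Finset.sum_range_zero, zero_add]
  simp only [Nat.sub_zero, Nat.sub_self]
  rw [coeff_zero_eq_constantCoeff, hf, hg, one_mul, mul_one, add_comm]

lemma coeff_one_list_prod (L : List (PowerSeries A))
    (h : ∀ f ∈ L, constantCoeff f = 1) :
    coeff 1 L.prod = (L.map (coeff 1)).sum := by
  induction L with
  | nil => simp
  | cons a L ih =>
      rw [List.prod_cons, List.map_cons, List.sum_cons,
        coeff_one_mul_of_const_one (h a (List.mem_cons_self))
          (constantCoeff_list_prod L (fun f hf => h f (List.mem_cons_of_mem a hf))),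
        ih (fun f hf => h f (List.mem_cons_of_mem a hf))]

lemma coeff_one_Eser (a : A) : coeff 1 (Eser a) = a := by
  rw [coeff_Eser]
  simp

lemma coeff_one_uSeries (c : Fin N → A) :
    coeff 1 (uSeries c) = (∑ l, c l) + (∑ l, c l) := by
  have h1 : ∀ f ∈ (List.ofFn fun l => Eser (c l)), constantCoeff f = 1 := by
    intro f hf
    rw [List.mem_ofFn] at hf
    obtain ⟨l, rfl⟩ := hf
    exact constantCoeff_Eser (c l)
  have h2 : ∀ f ∈ (List.ofFn fun l => Eser (c l)).reverse, constantCoeff f = 1 := by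
    intro f hf
    rw [List.mem_reverse] at hf
    exact h1 f hf
  rw [uSeries, coeff_one_mul_of_const_one (constantCoeff_list_prod _ h1)
    (constantCoeff_list_prod _ h2), coeff_one_list_prod _ h1, coeff_one_list_prod _ h2,
    List.map_reverse, List.sum_reverse, List.map_ofFn]
  have : (coeff 1 ∘ fun l => Eser (c l)) = c := by
    funext l
    exact coeff_one_Eser (c l)
  rw [this, List.sum_ofFn]

lemma map_ofFn_negX_Eser (c : Fin N → A) :
    (List.ofFn fun l => Eser (c l)).map negX = List.ofFn fun l => Eser (-(c l)) := by
  rw [List.map_ofFn]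
  congr 1
  funext l
  exact negX_Eser (c l)

lemma uSeries_mul_negX (c : Fin N → A) : uSeries c * negX (uSeries c) = 1 := by
  rw [uSeries, negX_mul, negX_list_prod, negX_list_prod, List.map_reverse, map_ofFn_negX_Eser]
  have hmid : (List.ofFn fun l => Eser (c l)).reverse.prod *
      (List.ofFn fun l => Eser (-(c l))).prod = 1 :=
    rev_prod_mul_ofFn _ _ (fun i => Eser_mul_neg (c i))
  have hout : (List.ofFn fun l => Eser (c l)).prod *
      (List.ofFn fun l => Eser (-(c l))).reverse.prod = 1 :=
    ofFn_prod_mul_rev _ _ (fun i => Eser_mul_neg (c i))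
  calc (List.ofFn fun l => Eser (c l)).prod * (List.ofFn fun l => Eser (c l)).reverse.prod *
        ((List.ofFn fun l => Eser (-(c l))).prod *
          (List.ofFn fun l => Eser (-(c l))).reverse.prod)
      = (List.ofFn fun l => Eser (c l)).prod *
        (((List.ofFn fun l => Eser (c l)).reverse.prod *
          (List.ofFn fun l => Eser (-(c l))).prod) *
          (List.ofFn fun l => Eser (-(c l))).reverse.prod) := by
        rw [mul_assoc, mul_assoc]
    _ = 1 := by rw [hmid, one_mul, hout]

lemma negX_mul_uSeries (c : Fin N → A) : negX (uSeries c) * uSeries c = 1 := by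
  rw [uSeries, negX_mul, negX_list_prod, negX_list_prod, List.map_reverse, map_ofFn_negX_Eser]
  have hmid : (List.ofFn fun l => Eser (-(c l))).reverse.prod *
      (List.ofFn fun l => Eser (c l)).prod = 1 :=
    rev_prod_mul_ofFn _ _ (fun i => Eser_neg_mul (c i))
  have hout : (List.ofFn fun l => Eser (-(c l))).prod *
      (List.ofFn fun l => Eser (c l)).reverse.prod = 1 :=
    ofFn_prod_mul_rev _ _ (fun i => Eser_neg_mul (c i))
  calc (List.ofFn fun l => Eser (-(c l))).prod * (List.ofFn fun l => Eser (-(c l))).reverse.prod *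
        ((List.ofFn fun l => Eser (c l)).prod * (List.ofFn fun l => Eser (c l)).reverse.prod)
      = (List.ofFn fun l => Eser (-(c l))).prod *
        (((List.ofFn fun l => Eser (-(c l))).reverse.prod *
          (List.ofFn fun l => Eser (c l)).prod) *
          (List.ofFn fun l => Eser (c l)).reverse.prod) := by
        rw [mul_assoc, mul_assoc]
    _ = 1 := by rw [hmid, one_mul, hout]

/-! ### oddness of the logarithm -/

lemma scalar_exp_neg_mul_exp :
    PowerSeries.rescale (-1 : ℂ) (PowerSeries.exp ℂ) * PowerSeries.exp ℂ = 1 := by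
  have h := PowerSeries.exp_mul_exp_eq_exp_add (-1 : ℂ) (1 : ℂ)
  rw [PowerSeries.rescale_one] at h
  rw [show (-1 : ℂ) + 1 = 0 by ring] at h
  rw [show (PowerSeries.rescale (0 : ℂ)) (PowerSeries.exp ℂ)
      = PowerSeries.C (constantCoeff (PowerSeries.exp ℂ)) by
    rw [PowerSeries.rescale_zero]; rfl] at h
  rw [PowerSeries.constantCoeff_exp, map_one] at h
  exact h

lemma scalar_exp_mul_exp_neg :
    PowerSeries.exp ℂ * PowerSeries.rescale (-1 : ℂ) (PowerSeries.exp ℂ) = 1 := by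
  rw [mul_comm]
  exact scalar_exp_neg_mul_exp

lemma mexp_neg_eq_Phi (g : PowerSeries A) :
    mexp (-g) = Phi g (PowerSeries.rescale (-1 : ℂ) (PowerSeries.exp ℂ)) := by
  ext n
  rw [coeff_mexp, coeff_Phi]
  apply Finset.sum_congr rfl
  intro ℓ _
  rw [PowerSeries.coeff_rescale, PowerSeries.coeff_exp, ratCast_fact]
  have hng : (-g) = (-1 : ℂ) • g := by rw [neg_smul, one_smul]
  rw [hng, smul_pow, PowerSeries.coeff_smul, smul_smul]
  congr 1
  ring

lemma mlog_uSeries_odd (c : Fin N → A) :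
    ∀ i, Even i → coeff i (mlog (uSeries c)) = 0 := by
  set u := uSeries c with hu
  set g := mlog (uSeries c) with hgdef
  have hu1 : constantCoeff u = 1 := constantCoeff_uSeries c
  have hg0 : constantCoeff g = 0 := constantCoeff_mlog _
  have hmexpg : mexp g = u := mexp_mlog hu1
  set w := Phi g (PowerSeries.rescale (-1 : ℂ) (PowerSeries.exp ℂ)) with hwdef
  have hwu : w * u = 1 := by
    rw [← hmexpg, hwdef, mexp, ← Phi_mul hg0, scalar_exp_neg_mul_exp, Phi_one]
  have huw : u * w = 1 := by
    rw [← hmexpg, hwdef, mexp, ← Phi_mul hg0, scalar_exp_mul_exp_neg, Phi_one]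
  have hnegu : negX u = w := by
    calc negX u = negX u * (u * w) := by rw [huw, mul_one]
    _ = (negX u * u) * w := by rw [mul_assoc]
    _ = w := by rw [negX_mul_uSeries, one_mul]
  have hkey : mexp (negX g) = mexp (-g) := by
    rw [← negX_mexp, hmexpg, hnegu, mexp_neg_eq_Phi]
  have hng : negX g = -g := by
    apply mexp_inj _ _ hkey
    · rw [← coeff_zero_eq_constantCoeff_apply, coeff_negX, pow_zero, one_smul,
        coeff_zero_eq_constantCoeff, hg0]
    · rw [map_neg, hg0, neg_zero]
  intro i hi
  have h1 := congrArg (coeff i) hng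
  rw [coeff_negX, map_neg, hi.neg_one_pow, one_smul] at h1
  have h2 : (2 : ℂ) • coeff i g = 0 := by
    rw [two_smul]
    nth_rewrite 1 [h1]
    exact neg_add_cancel _
  have h3 := congrArg (fun x => ((2 : ℂ))⁻¹ • x) h2
  simpa [smul_smul] using h3

/-! ### coefficients of powers of uSeries -/

lemma coeff_uSeries_pow (c : Fin N → A) (k n : ℕ) :
    coeff n ((uSeries c) ^ k) = ∑ ℓ ∈ range (n + 1),
      (((k : ℂ)) ^ ℓ * ((ℓ.factorial : ℂ))⁻¹) • coeff n ((mlog (uSeries c)) ^ ℓ) := by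
  have hu1 : constantCoeff (uSeries c) = 1 := constantCoeff_uSeries c
  have hg0 : constantCoeff (mlog (uSeries c)) = 0 := constantCoeff_mlog _
  conv_lhs => rw [← mexp_mlog hu1]
  rw [mexp, ← Phi_pow hg0, PowerSeries.exp_pow_eq_rescale_exp, coeff_Phi]
  apply Finset.sum_congr rfl
  intro ℓ _
  rw [PowerSeries.coeff_rescale, PowerSeries.coeff_exp, ratCast_fact]

/-! ### the order conditions -/

lemma order_conditions (c : Fin N → A) {m : ℕ} (hm : 1 ≤ m)
    (k : Fin m → ℕ) (hk : ∀ j, 0 < k j) (aC : Fin m → ℂ)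
    (hVC : ∀ q : ℕ, q < m → ∑ j, aC j * (((k j : ℂ)) ^ (2 * q))⁻¹ = if q = 0 then 1 else 0)
    {n : ℕ} (hn : n ≤ 2 * m) :
    ∑ j, aC j • ((((k j : ℂ)) ^ n)⁻¹ • coeff n ((uSeries c) ^ (k j)))
      = coeff n (Eser (coeff 1 (uSeries c))) := by
  classical
  have hu1 : constantCoeff (uSeries c) = 1 := constantCoeff_uSeries c
  have hg0 : constantCoeff (mlog (uSeries c)) = 0 := constantCoeff_mlog _
  have hgb : coeff 1 (mlog (uSeries c)) = coeff 1 (uSeries c) := coeff_one_mlog _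
  have hodd := mlog_uSeries_odd c
  have hsum1 : ∑ j, aC j = 1 := by
    have h := hVC 0 (by omega)
    simpa using h
  have hkne : ∀ j, ((k j : ℂ)) ≠ 0 := fun j => Nat.cast_ne_zero.mpr (hk j).ne'
  rcases Nat.eq_zero_or_pos n with h0 | h0
  · subst h0
    have hconst : ∀ j, coeff 0 ((uSeries c) ^ (k j)) = 1 := by
      intro j
      rw [coeff_zero_eq_constantCoeff, map_pow, hu1, one_pow]
    simp only [pow_zero, inv_one, one_smul, hconst, coeff_Eser]
    rw [← Finset.sum_smul, hsum1]
    simp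
  · -- n ≥ 1
    have hstep : ∀ j : Fin m, aC j • ((((k j : ℂ)) ^ n)⁻¹ • coeff n ((uSeries c) ^ (k j)))
        = ∑ ℓ ∈ range (n + 1), ((aC j * (((k j : ℂ)) ^ ℓ * (((k j : ℂ)) ^ n)⁻¹)) *
            ((ℓ.factorial : ℂ))⁻¹) • coeff n ((mlog (uSeries c)) ^ ℓ) := by
      intro j
      rw [coeff_uSeries_pow, Finset.smul_sum, Finset.smul_sum]
      apply Finset.sum_congr rfl
      intro ℓ _
      rw [smul_smul, smul_smul]
      congr 1
      ring
    rw [Finset.sum_congr rfl (fun j _ => hstep j), Finset.sum_comm]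
    have hterm : ∀ ℓ ∈ range (n + 1),
        (∑ j, ((aC j * (((k j : ℂ)) ^ ℓ * (((k j : ℂ)) ^ n)⁻¹)) *
            ((ℓ.factorial : ℂ))⁻¹) • coeff n ((mlog (uSeries c)) ^ ℓ))
        = if ℓ = n then ((n.factorial : ℂ))⁻¹ • (coeff 1 (uSeries c)) ^ n else 0 := by
      intro ℓ hℓmem
      rw [Finset.mem_range] at hℓmem
      rw [← Finset.sum_smul]
      by_cases hln : ℓ = n
      · subst hln
        rw [if_pos rfl]
        have hS1 : ∑ j, aC j * (((k j : ℂ)) ^ ℓ * (((k j : ℂ)) ^ ℓ)⁻¹) = 1 := by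
          rw [← hsum1]
          apply Finset.sum_congr rfl
          intro j _
          rw [mul_inv_cancel₀ (pow_ne_zero ℓ (hkne j)), mul_one]
        rw [← Finset.sum_mul, hS1, one_mul, coeff_pow_self hg0, hgb]
      · rw [if_neg hln]
        have hlltn : ℓ < n := by omega
        by_cases hpar : Even (n + ℓ)
        · -- even gap: use the Vandermonde conditions
          rcases Nat.eq_zero_or_pos ℓ with hl0 | hl0
          · subst hl0
            rw [pow_zero, PowerSeries.coeff_one, if_neg h0.ne', smul_zero]
          · obtain ⟨w, hw⟩ := hpar
            set q := w - ℓ with hqdef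
            have hnlq : n = ℓ + 2 * q := by omega
            have hq1 : 1 ≤ q := by omega
            have hqm : q < m := by omega
            have hSzero : ∑ j, (aC j * (((k j : ℂ)) ^ ℓ * (((k j : ℂ)) ^ n)⁻¹)) *
                ((ℓ.factorial : ℂ))⁻¹ = 0 := by
              have hinner : ∀ j : Fin m, aC j * (((k j : ℂ)) ^ ℓ * (((k j : ℂ)) ^ n)⁻¹)
                  = aC j * (((k j : ℂ)) ^ (2 * q))⁻¹ := by
                intro j
                congr 1
                rw [hnlq, pow_add, mul_inv, ← mul_assoc,
                  mul_inv_cancel₀ (pow_ne_zero ℓ (hkne j)), one_mul]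
              rw [← Finset.sum_mul]
              rw [Finset.sum_congr rfl (fun j _ => hinner j), hVC q hqm,
                if_neg (by omega), zero_mul]
            rw [hSzero, zero_smul]
        · -- parity mismatch: the coefficient of the power vanishes
          rw [coeff_pow_odd_support hodd ℓ n hpar, smul_zero]
    rw [Finset.sum_congr rfl hterm, Finset.sum_ite_eq' (range (n + 1)) n,
      if_pos (Finset.mem_range.mpr (by omega)), coeff_Eser]

end USeries

/-! ### analytic evaluation -/

section Analytic

variable {B : Type*} [NormedRing B] [NormedAlgebra ℂ B] [CompleteSpace B] [NormOneClass B]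

lemma norm_pow_le'' (a : B) (n : ℕ) : ‖a ^ n‖ ≤ ‖a‖ ^ n := by
  rcases Nat.eq_zero_or_pos n with h | h
  · subst h; simp
  · exact norm_pow_le' a h

lemma inv_fact_mul_inv_fact_real {i j n : ℕ} (h : i + j = n) :
    ((i.factorial : ℝ))⁻¹ * ((j.factorial : ℝ))⁻¹ = (n.choose i : ℝ) * ((n.factorial : ℝ))⁻¹ := by
  have hin : i ≤ n := by omega
  have h1 : (n.choose i : ℝ) * (i.factorial : ℝ) * ((n - i).factorial : ℝ)
      = (n.factorial : ℝ) := by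
    exact_mod_cast congrArg (Nat.cast : ℕ → ℝ) (Nat.choose_mul_factorial_mul_factorial hin)
  have hj : n - i = j := by omega
  rw [hj] at h1
  have h2 : (i.factorial : ℝ) ≠ 0 := Nat.cast_ne_zero.mpr i.factorial_ne_zero
  have h3 : (j.factorial : ℝ) ≠ 0 := Nat.cast_ne_zero.mpr j.factorial_ne_zero
  have h4 : (n.factorial : ℝ) ≠ 0 := Nat.cast_ne_zero.mpr n.factorial_ne_zero
  field_simp
  linear_combination -h1

lemma sum_antidiag_pow (C D : ℝ) (n : ℕ) :
    ∑ ij ∈ antidiagonal n, C ^ ij.1 / (ij.1.factorial : ℝ) * (D ^ ij.2 / (ij.2.factorial : ℝ))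
      = (C + D) ^ n / (n.factorial : ℝ) := by
  rw [add_pow, Finset.sum_div, Finset.Nat.sum_antidiagonal_eq_sum_range_succ_mk]
  apply Finset.sum_congr rfl
  intro i hi
  have hin : i ≤ n := Nat.lt_succ_iff.mp (Finset.mem_range.mp hi)
  have key := inv_fact_mul_inv_fact_real (Nat.add_sub_cancel' hin)
  have hexp : C ^ i / (i.factorial : ℝ) * (D ^ (n - i) / ((n - i).factorial : ℝ))
      = (C ^ i * D ^ (n - i)) * (((i.factorial : ℝ))⁻¹ * (((n - i).factorial : ℝ))⁻¹) := by
    ring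
  rw [hexp, key]
  ring

/-- evaluation predicate -/
def EvTo (f : PowerSeries B) (F : ℝ → B) (C : ℝ) : Prop :=
  (∀ n, ‖coeff n f‖ ≤ C ^ n / (n.factorial : ℝ)) ∧
  ∀ s : ℝ, HasSum (fun n => ((s : ℂ)) ^ n • coeff n f) (F s)

lemma EvTo.summable_norm {f : PowerSeries B} {F : ℝ → B} {C : ℝ} (hf : EvTo f F C) (s : ℝ) :
    Summable fun n => ‖((s : ℂ)) ^ n • coeff n f‖ := by
  apply Summable.of_nonneg_of_le (fun n => norm_nonneg _) _
    (Real.summable_pow_div_factorial (|s| * C))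
  intro n
  rw [norm_smul, norm_pow, Complex.norm_real, Real.norm_eq_abs]
  calc |s| ^ n * ‖coeff n f‖ ≤ |s| ^ n * (C ^ n / (n.factorial : ℝ)) :=
        mul_le_mul_of_nonneg_left (hf.1 n) (by positivity)
    _ = (|s| * C) ^ n / (n.factorial : ℝ) := by rw [mul_pow]; ring

lemma EvTo.one : EvTo (1 : PowerSeries B) (fun _ => (1 : B)) 0 := by
  constructor
  · intro n
    rw [PowerSeries.coeff_one]
    rcases Nat.eq_zero_or_pos n with h | h
    · subst h; simp
    · rw [if_neg h.ne', norm_zero, zero_pow h.ne', zero_div]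
  · intro s
    have hfun : (fun n => ((s : ℂ)) ^ n • coeff n (1 : PowerSeries B))
        = fun n => if n = 0 then (1 : B) else 0 := by
      funext n
      rw [PowerSeries.coeff_one]
      split
      · subst ‹n = 0›; simp
      · rw [smul_zero]
    rw [hfun]
    exact hasSum_ite_eq 0 1

lemma EvTo.mul {f g : PowerSeries B} {F G : ℝ → B} {C D : ℝ} (hC : 0 ≤ C) (hD : 0 ≤ D)
    (hf : EvTo f F C) (hg : EvTo g G D) :
    EvTo (f * g) (fun s => F s * G s) (C + D) := by
  constructor
  · intro n
    rw [PowerSeries.coeff_mul]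
    calc ‖∑ ij ∈ antidiagonal n, coeff ij.1 f * coeff ij.2 g‖
        ≤ ∑ ij ∈ antidiagonal n, ‖coeff ij.1 f * coeff ij.2 g‖ := norm_sum_le _ _
      _ ≤ ∑ ij ∈ antidiagonal n, C ^ ij.1 / (ij.1.factorial : ℝ) *
            (D ^ ij.2 / (ij.2.factorial : ℝ)) := by
          apply Finset.sum_le_sum
          intro ij _
          calc ‖coeff ij.1 f * coeff ij.2 g‖ ≤ ‖coeff ij.1 f‖ * ‖coeff ij.2 g‖ :=
                norm_mul_le _ _
            _ ≤ C ^ ij.1 / (ij.1.factorial : ℝ) * (D ^ ij.2 / (ij.2.factorial : ℝ)) :=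
                mul_le_mul (hf.1 ij.1) (hg.1 ij.2) (norm_nonneg _) (by positivity)
      _ = (C + D) ^ n / (n.factorial : ℝ) := sum_antidiag_pow C D n
  · intro s
    have h1 := hf.2 s
    have h2 := hg.2 s
    have key := hasSum_sum_range_mul_of_summable_norm (hf.summable_norm s) (hg.summable_norm s)
    rw [h1.tsum_eq, h2.tsum_eq] at key
    have hfun : (fun n => ∑ k ∈ range (n + 1),
        ((s : ℂ)) ^ k • coeff k f * (((s : ℂ)) ^ (n - k) • coeff (n - k) g))
        = fun n => ((s : ℂ)) ^ n • coeff n (f * g) := by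
      funext n
      rw [PowerSeries.coeff_mul, Finset.smul_sum, Finset.Nat.sum_antidiagonal_eq_sum_range_succ_mk]
      apply Finset.sum_congr rfl
      intro k hk
      have hkn : k ≤ n := Nat.lt_succ_iff.mp (Finset.mem_range.mp hk)
      rw [smul_mul_smul' _ _ _ _, ← pow_add, Nat.add_sub_cancel' hkn]
    rw [hfun] at key
    exact key

lemma EvTo.pow {f : PowerSeries B} {F : ℝ → B} {C : ℝ} (hC : 0 ≤ C) (hf : EvTo f F C) (k : ℕ) :
    EvTo (f ^ k) (fun s => (F s) ^ k) ((k : ℝ) * C) := by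
  induction k with
  | zero =>
      simp only [pow_zero, Nat.cast_zero, zero_mul]
      exact EvTo.one
  | succ k ih =>
      have hmul := EvTo.mul (mul_nonneg k.cast_nonneg hC) hC ih hf
      simp only [← pow_succ] at hmul
      have hcast : ((k + 1 : ℕ) : ℝ) * C = (k : ℝ) * C + C := by push_cast; ring
      rw [hcast]
      exact hmul

lemma EvTo.list (L : List (PowerSeries B × (ℝ → B) × ℝ))
    (hL : ∀ x ∈ L, 0 ≤ x.2.2 ∧ EvTo x.1 x.2.1 x.2.2) :
    0 ≤ (L.map fun x => x.2.2).sum ∧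
      EvTo (L.map fun x => x.1).prod (fun s => (L.map fun x => x.2.1 s).prod)
        ((L.map fun x => x.2.2).sum) := by
  induction L with
  | nil =>
      constructor
      · simp
      · simpa using (EvTo.one : EvTo (1 : PowerSeries B) (fun _ => (1 : B)) 0)
  | cons x L ih =>
      obtain ⟨hx1, hx2⟩ := hL x (List.mem_cons_self)
      obtain ⟨hs, hev⟩ := ih (fun y hy => hL y (List.mem_cons_of_mem x hy))
      constructor
      · simp only [List.map_cons, List.sum_cons]
        exact add_nonneg hx1 hs
      · simp only [List.map_cons, List.prod_cons, List.sum_cons]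
        exact EvTo.mul hx1 hs hx2 hev

lemma EvTo_Eser (a : B) : EvTo (Eser a) (fun s => NormedSpace.exp ((s : ℂ) • a)) ‖a‖ := by
  constructor
  · intro n
    rw [coeff_Eser, norm_smul, norm_inv, Complex.norm_natCast]
    calc ((n.factorial : ℝ))⁻¹ * ‖a ^ n‖ ≤ ((n.factorial : ℝ))⁻¹ * ‖a‖ ^ n :=
          mul_le_mul_of_nonneg_left (norm_pow_le'' a n) (by positivity)
      _ = ‖a‖ ^ n / (n.factorial : ℝ) := by ring
  · intro s
    have h := NormedSpace.exp_series_hasSum_exp' (𝕂 := ℂ) ((s : ℂ) • a)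
    have hfun : (fun n : ℕ => ((n.factorial : ℂ))⁻¹ • ((s : ℂ) • a) ^ n)
        = fun n => ((s : ℂ)) ^ n • coeff n (Eser a) := by
      funext n
      rw [coeff_Eser, smul_pow, smul_comm]
    rw [hfun] at h
    exact h

lemma tsum_tail_exp_bound (x : ℝ) (hx : 0 ≤ x) (K : ℕ) :
    ∑' i : ℕ, x ^ (i + K) / ((i + K).factorial : ℝ)
      ≤ x ^ K / (K.factorial : ℝ) * Real.exp x := by
  have hsum0 : Summable (fun n : ℕ => x ^ n / (n.factorial : ℝ)) :=
    Real.summable_pow_div_factorial x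
  have hsum1 : Summable (fun i : ℕ => x ^ (i + K) / ((i + K).factorial : ℝ)) := by
    exact (summable_nat_add_iff K).mpr hsum0
  have hsum2 : Summable (fun i : ℕ => x ^ K / (K.factorial : ℝ) * (x ^ i / (i.factorial : ℝ))) :=
    hsum0.mul_left _
  have hle : ∀ i : ℕ, x ^ (i + K) / ((i + K).factorial : ℝ)
      ≤ x ^ K / (K.factorial : ℝ) * (x ^ i / (i.factorial : ℝ)) := by
    intro i
    have hd : (K.factorial * i.factorial : ℕ) ∣ (i + K).factorial := by
      rw [add_comm i K]
      exact Nat.factorial_mul_factorial_dvd_factorial_add K i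
    have hfl : (K.factorial : ℝ) * (i.factorial : ℝ) ≤ ((i + K).factorial : ℝ) := by
      exact_mod_cast Nat.le_of_dvd (Nat.factorial_pos _) hd
    have hxp : x ^ (i + K) = x ^ K * x ^ i := by rw [pow_add]; ring
    rw [hxp]
    calc x ^ K * x ^ i / ((i + K).factorial : ℝ)
        ≤ x ^ K * x ^ i / ((K.factorial : ℝ) * (i.factorial : ℝ)) := by
          have h0 : (0:ℝ) < (K.factorial : ℝ) * (i.factorial : ℝ) := by positivity
          gcongr
      _ = x ^ K / (K.factorial : ℝ) * (x ^ i / (i.factorial : ℝ)) := by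
          rw [div_mul_div_comm]
  calc ∑' i : ℕ, x ^ (i + K) / ((i + K).factorial : ℝ)
      ≤ ∑' i : ℕ, x ^ K / (K.factorial : ℝ) * (x ^ i / (i.factorial : ℝ)) :=
        Summable.tsum_le_tsum hle hsum1 hsum2
    _ = x ^ K / (K.factorial : ℝ) * ∑' i : ℕ, x ^ i / (i.factorial : ℝ) := tsum_mul_left
    _ = x ^ K / (K.factorial : ℝ) * Real.exp x := by
        congr 1
        rw [Real.exp_eq_exp_ℝ, NormedSpace.exp_eq_tsum_div]

lemma pow_sub_pow_norm_le (M V : B) (η : ℝ) (hV : ‖V‖ ≤ 1) (hMV : ‖M - V‖ ≤ η) (hη : 0 ≤ η) :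
    ∀ n : ℕ, ‖M ^ n - V ^ n‖ ≤ (∑ i ∈ range n, (1 + η) ^ i) * η := by
  have hMeq : V + (M - V) = M := by abel
  have hM : ‖M‖ ≤ 1 + η := by
    calc ‖M‖ = ‖V + (M - V)‖ := by rw [hMeq]
      _ ≤ ‖V‖ + ‖M - V‖ := norm_add_le _ _
      _ ≤ 1 + η := add_le_add hV hMV
  intro n
  induction n with
  | zero => simp
  | succ n ih =>
      have hid : M ^ (n + 1) - V ^ (n + 1) = M ^ n * (M - V) + (M ^ n - V ^ n) * V := by
        rw [pow_succ, pow_succ]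
        noncomm_ring
      rw [hid]
      calc ‖M ^ n * (M - V) + (M ^ n - V ^ n) * V‖
          ≤ ‖M ^ n * (M - V)‖ + ‖(M ^ n - V ^ n) * V‖ := norm_add_le _ _
        _ ≤ ‖M ^ n‖ * ‖M - V‖ + ‖M ^ n - V ^ n‖ * ‖V‖ :=
            add_le_add (norm_mul_le _ _) (norm_mul_le _ _)
        _ ≤ (1 + η) ^ n * η + ((∑ i ∈ range n, (1 + η) ^ i) * η) * 1 := by
            apply add_le_add
            · exact mul_le_mul (le_trans (norm_pow_le'' M n)
                (pow_le_pow_left₀ (norm_nonneg M) hM n)) hMV (norm_nonneg _) (by positivity)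
            · exact mul_le_mul ih hV (norm_nonneg _) (by positivity)
        _ = (∑ i ∈ range (n + 1), (1 + η) ^ i) * η := by
            rw [Finset.sum_range_succ]
            ring

lemma norm_exp_skew {E : Type*} [NormedRing E] [NormedAlgebra ℂ E] [CompleteSpace E]
    [StarRing E] [CStarRing E] [ContinuousStar E] [Nontrivial E]
    (x : E) (hx : star x = -x) : ‖NormedSpace.exp x‖ ≤ 1 := by
  let +nondep : NormedAlgebra ℚ E := .restrictScalars ℚ ℂ E
  have h1 : NormedSpace.exp (-x) * NormedSpace.exp x = 1 := by
    rw [← NormedSpace.exp_add_of_commute (Commute.neg_left (Commute.refl x)),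
      neg_add_cancel, NormedSpace.exp_zero]
  have h2 : star (NormedSpace.exp x) * NormedSpace.exp x = 1 := by
    rw [NormedSpace.star_exp, hx, h1]
  have h3 : ‖NormedSpace.exp x‖ * ‖NormedSpace.exp x‖ = 1 := by
    rw [← CStarRing.norm_star_mul_self, h2, norm_one]
  nlinarith [norm_nonneg (NormedSpace.exp x)]

end Analytic

end MPF

open MPF PowerSeries Finset


open scoped Matrix.Norms.L2Operator

/-- The symmetric second-order Trotter product formula
`U₂ δ = (∏_{l=1}^{N} exp (-i h l δ / 2)) * (∏_{l=N}^{1} exp (-i h l δ / 2))`,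
the second product taken in reversed order. -/
noncomputable def U2 {d N : ℕ} (h : Fin N → Matrix (Fin d) (Fin d) ℂ) (δ : ℝ) :
    Matrix (Fin d) (Fin d) ℂ :=
  (List.ofFn fun l => NormedSpace.exp (((-(δ / 2) : ℝ) * Complex.I : ℂ) • h l)).prod *
    (List.ofFn fun l =>
      NormedSpace.exp (((-(δ / 2) : ℝ) * Complex.I : ℂ) • h l)).reverse.prod

/-- Combining Eqs. (15)–(17): the choice
`r ≥ t λ * max ((8 t λ ‖a‖₁ / (ε (2 m + 1)!)) ^ (1 / (2 m))) (1 / log 2)`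
of the number of steps guarantees total multiproduct simulation error at most `ε`. -/
theorem multiproduct_simulation_error_bound {d N : ℕ}
    (h : Fin N → Matrix (Fin d) (Fin d) ℂ)
    (hherm : ∀ l, (h l).IsHermitian)
    (H : Matrix (Fin d) (Fin d) ℂ) (hH : H = ∑ l, h l)
    (lam : ℝ) (hlam : lam = ∑ l, ‖h l‖) (hlampos : 0 < lam)
    (t : ℝ) (ht : 0 < t) (ε : ℝ) (hε : 0 < ε) (hε1 : ε ≤ 1)
    {m : ℕ} (hm : 1 ≤ m)
    (k : Fin m → ℕ) (hkpos : ∀ j, 0 < k j) (hkinj : Function.Injective k)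
    (a : Fin m → ℝ)
    (hV : ∀ i : Fin m,
      ∑ j, a j * ((k j : ℝ) ^ (2 * (i : ℕ)))⁻¹ = if (i : ℕ) = 0 then 1 else 0)
    (r : ℕ) (hr : 0 < r)
    (hrbound : (r : ℝ) ≥ t * lam *
      max ((8 * t * lam * (∑ j, |a j|) / (ε * (2 * m + 1).factorial)) ^
          ((1 : ℝ) / (2 * m)))
        (1 / Real.log 2)) :
    ‖(∑ j, ((a j : ℂ) • (U2 h (t / (r * k j))) ^ (k j))) ^ r -
        NormedSpace.exp ((-(t : ℂ) * Complex.I) • H)‖ ≤ ε := by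
  classical
  rcases Nat.eq_zero_or_pos d with hd0 | hd0
  · -- trivial case `d = 0`
    subst hd0
    have hz : ∀ X Y : Matrix (Fin 0) (Fin 0) ℂ, X = Y := by
      intro X Y; ext i j; exact absurd i.2 (by omega)
    rw [hz ((∑ j, ((a j : ℂ) • (U2 h (t / (r * k j))) ^ (k j))) ^ r -
        NormedSpace.exp ((-(t : ℂ) * Complex.I) • H)) 0, norm_zero]
    linarith
  -- instances
  haveI : Nonempty (Fin d) := ⟨⟨0, hd0⟩⟩
  haveI : CompleteSpace (Matrix (Fin d) (Fin d) ℂ) := FiniteDimensional.complete ℂ _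
  haveI : NormOneClass (Matrix (Fin d) (Fin d) ℂ) := ⟨CStarRing.norm_one⟩
  haveI : ContinuousStar (Matrix (Fin d) (Fin d) ℂ) := by
    constructor
    have hiso : Isometry (star : Matrix (Fin d) (Fin d) ℂ → Matrix (Fin d) (Fin d) ℂ) := by
      apply Isometry.of_dist_eq
      intro x y
      rw [dist_eq_norm, dist_eq_norm, ← star_sub, Matrix.star_eq_conjTranspose,
        Matrix.l2_opNorm_conjTranspose]
    exact hiso.continuous
  -- basic quantities
  have hrpos : (0:ℝ) < r := Nat.cast_pos.mpr hr
  have htlam : (0:ℝ) < t * lam := mul_pos ht hlampos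
  set δ : ℝ := t / r with hδ
  have hδpos : 0 < δ := div_pos ht hrpos
  set x : ℝ := lam * δ with hxdef
  have hxpos : 0 < x := mul_pos hlampos hδpos
  set Sa : ℝ := ∑ j, |a j| with hSadef
  set K : ℕ := 2 * m + 1 with hKdef
  have hKfpos : (0:ℝ) < (K.factorial : ℝ) := by positivity
  have hsum1R : ∑ j, a j = 1 := by
    have h0 := hV ⟨0, by omega⟩
    simpa using h0
  have hSa1 : (1:ℝ) ≤ Sa := by
    rw [hSadef]
    calc (1:ℝ) = |∑ j, a j| := by rw [hsum1R]; norm_num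
      _ ≤ ∑ j, |a j| := Finset.abs_sum_le_sum_abs _ _
  have hSa0 : (0:ℝ) < Sa := lt_of_lt_of_le one_pos hSa1
  have hlog2 : (0:ℝ) < Real.log 2 := Real.log_pos (by norm_num)
  have hxlog : x ≤ Real.log 2 := by
    have h1 : t * lam * (1 / Real.log 2) ≤ (r:ℝ) :=
      le_trans (mul_le_mul_of_nonneg_left (le_max_right _ _) htlam.le) hrbound
    have hx2 : x = t * lam / r := by rw [hxdef, hδ]; ring
    have h2 := mul_le_mul_of_nonneg_right h1 hlog2.le
    rw [mul_assoc, one_div, inv_mul_cancel₀ hlog2.ne', mul_one] at h2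
    rw [hx2, div_le_iff₀ hrpos]
    linarith [h2]
  have hexpx2 : Real.exp x ≤ 2 := by
    calc Real.exp x ≤ Real.exp (Real.log 2) := Real.exp_le_exp.mpr hxlog
      _ = 2 := Real.exp_log (by norm_num)
  -- complex Vandermonde conditions
  have hVC : ∀ q : ℕ, q < m →
      ∑ j, ((a j : ℂ)) * (((k j : ℂ)) ^ (2 * q))⁻¹ = if q = 0 then 1 else 0 := by
    intro q hq
    have h1 : ∑ j, a j * ((k j : ℝ) ^ (2 * q))⁻¹ = if q = 0 then 1 else 0 := by
      simpa using hV ⟨q, hq⟩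
    have hcast : ((∑ j, a j * (((k j : ℝ)) ^ (2 * q))⁻¹ : ℝ) : ℂ)
        = ∑ j, ((a j : ℂ)) * (((k j : ℂ)) ^ (2 * q))⁻¹ := by
      push_cast
      rfl
    rw [← hcast, h1]
    split <;> norm_num
  -- the generator family
  set c : Fin N → Matrix (Fin d) (Fin d) ℂ :=
    fun l => ((-(2⁻¹ : ℂ)) * Complex.I) • h l with hc
  have hcnorm : ∀ l, ‖c l‖ = ‖h l‖ / 2 := by
    intro l
    rw [hc]
    simp only
    rw [norm_smul]
    have hsc : ‖(-(2⁻¹ : ℂ)) * Complex.I‖ = 2⁻¹ := by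
      rw [norm_mul, norm_neg, Complex.norm_I, mul_one, norm_inv]
      simp
    rw [hsc]
    ring
  -- EvTo for uSeries
  have hmemlist : ∀ y ∈ (List.ofFn fun l => ((Eser (c l) : PowerSeries (Matrix (Fin d) (Fin d) ℂ)),
      fun s : ℝ => NormedSpace.exp ((s : ℂ) • c l), ‖c l‖)), 0 ≤ y.2.2 ∧ EvTo y.1 y.2.1 y.2.2 := by
    intro y hy
    rw [List.mem_ofFn] at hy
    obtain ⟨l, rfl⟩ := hy
    exact ⟨norm_nonneg _, EvTo_Eser (c l)⟩
  have hA := EvTo.list _ hmemlist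
  have hB := EvTo.list ((List.ofFn fun l => ((Eser (c l) : PowerSeries (Matrix (Fin d) (Fin d) ℂ)),
      fun s : ℝ => NormedSpace.exp ((s : ℂ) • c l), ‖c l‖)).reverse)
    (fun y hy => hmemlist y (List.mem_reverse.mp hy))
  have hmul := EvTo.mul hA.1 hB.1 hA.2 hB.2
  simp only [List.map_reverse, List.sum_reverse, List.map_ofFn, Function.comp,
    List.sum_ofFn] at hmul
  have hCval : ((∑ l, ‖c l‖) + ∑ l, ‖c l‖) = lam := by
    have : ∑ l, ‖c l‖ = lam / 2 := by
      rw [hlam, Finset.sum_div]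
      exact Finset.sum_congr rfl fun l _ => hcnorm l
    rw [this]; ring
  rw [hCval] at hmul
  have hEvU : EvTo (uSeries c) (fun s => U2 h s) lam := by
    have hfun : (fun s : ℝ => (List.ofFn fun l => NormedSpace.exp ((s : ℂ) • c l)).prod *
        (List.ofFn fun l => NormedSpace.exp ((s : ℂ) • c l)).reverse.prod)
        = fun s => U2 h s := by
      funext s
      rw [U2]
      have hexp : (fun l => NormedSpace.exp ((s : ℂ) • c l))
          = fun l => NormedSpace.exp (((-(s / 2) : ℝ) * Complex.I : ℂ) • h l) := by
        funext l
        congr 1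
        rw [hc]
        simp only
        rw [smul_smul]
        congr 1
        push_cast
        ring
      rw [hexp]
    rw [uSeries]
    rw [← hfun]
    exact hmul
  have hEvUk : ∀ j, EvTo ((uSeries c) ^ (k j)) (fun s => (U2 h s) ^ (k j)) ((k j : ℝ) * lam) :=
    fun j => EvTo.pow hlampos.le hEvU (k j)
  -- b and its facts
  set b : Matrix (Fin d) (Fin d) ℂ := (-Complex.I) • H with hb
  have hbu : coeff 1 (uSeries c) = b := by
    rw [coeff_one_uSeries]
    have hsumc : ∑ l, c l = ((-(2⁻¹ : ℂ)) * Complex.I) • ∑ l, h l := by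
      rw [Finset.smul_sum]
    rw [hsumc, hb, hH, ← add_smul]
    congr 1
    ring
  have hbnorm : ‖b‖ ≤ lam := by
    rw [hb, norm_smul, norm_neg, Complex.norm_I, one_mul, hH, hlam]
    exact norm_sum_le _ _
  have hEvE := EvTo_Eser b
  -- coefficient bounds
  have hvbound : ∀ (j : Fin m) (n : ℕ),
      ‖(((k j : ℂ)) ^ n)⁻¹ • coeff n ((uSeries c) ^ (k j))‖
        ≤ lam ^ n / (n.factorial : ℝ) := by
    intro j n
    have hkj : (0:ℝ) < (k j : ℝ) := Nat.cast_pos.mpr (hkpos j)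
    rw [norm_smul, norm_inv, norm_pow, Complex.norm_natCast]
    have h1 := (hEvUk j).1 n
    calc ((k j : ℝ) ^ n)⁻¹ * ‖coeff n ((uSeries c) ^ (k j))‖
        ≤ ((k j : ℝ) ^ n)⁻¹ * (((k j : ℝ) * lam) ^ n / (n.factorial : ℝ)) :=
          mul_le_mul_of_nonneg_left h1 (by positivity)
      _ = lam ^ n / (n.factorial : ℝ) := by
          rw [mul_pow]
          field_simp
  -- the difference coefficients
  set W : ℕ → Matrix (Fin d) (Fin d) ℂ := fun n =>
    (∑ j, (a j : ℂ) • ((((k j : ℂ)) ^ n)⁻¹ •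
      coeff n ((uSeries c) ^ (k j))))
      - coeff n (Eser b) with hW
  have hWzero : ∀ n ≤ 2 * m, W n = 0 := by
    intro n hn
    rw [hW]
    simp only
    rw [order_conditions c hm k hkpos (fun j => (a j : ℂ)) hVC hn, hbu, sub_self]
  have hWbound : ∀ n, ‖W n‖ ≤ (Sa + 1) * (lam ^ n / (n.factorial : ℝ)) := by
    intro n
    rw [hW]
    simp only
    calc ‖(∑ j, (a j : ℂ) • ((((k j : ℂ)) ^ n)⁻¹ •
        coeff n ((uSeries c) ^ (k j))))
        - coeff n (Eser b)‖
        ≤ ‖∑ j, (a j : ℂ) • ((((k j : ℂ)) ^ n)⁻¹ •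
            coeff n ((uSeries c) ^ (k j)))‖ +
          ‖coeff n (Eser b)‖ := norm_sub_le _ _
      _ ≤ (∑ j, |a j| * (lam ^ n / (n.factorial : ℝ))) + ‖b‖ ^ n / (n.factorial : ℝ) := by
          apply add_le_add
          · calc ‖∑ j, (a j : ℂ) • ((((k j : ℂ)) ^ n)⁻¹ •
                coeff n ((uSeries c) ^ (k j)))‖
                ≤ ∑ j, ‖(a j : ℂ) • ((((k j : ℂ)) ^ n)⁻¹ •
                  coeff n ((uSeries c) ^ (k j)))‖ :=
                  norm_sum_le _ _
              _ ≤ ∑ j, |a j| * (lam ^ n / (n.factorial : ℝ)) := by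
                  apply Finset.sum_le_sum
                  intro j _
                  rw [norm_smul, Complex.norm_real, Real.norm_eq_abs]
                  exact mul_le_mul_of_nonneg_left (hvbound j n) (abs_nonneg _)
          · exact hEvE.1 n
      _ ≤ Sa * (lam ^ n / (n.factorial : ℝ)) + lam ^ n / (n.factorial : ℝ) := by
          apply add_le_add
          · rw [← Finset.sum_mul]
          · gcongr
      _ = (Sa + 1) * (lam ^ n / (n.factorial : ℝ)) := by ring
  -- HasSum assembly
  have hHSj : ∀ j : Fin m, HasSum
      (fun n => ((δ:ℂ)) ^ n • ((a j : ℂ) • ((((k j : ℂ)) ^ n)⁻¹ •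
        coeff n ((uSeries c) ^ (k j)))))
      ((a j : ℂ) • (U2 h (t / ((r:ℝ) * (k j : ℝ)))) ^ (k j)) := by
    intro j
    have hkj : (0:ℝ) < (k j : ℝ) := Nat.cast_pos.mpr (hkpos j)
    have h1 := (hEvUk j).2 (t / ((r:ℝ) * (k j : ℝ)))
    have h2 := h1.const_smul ((a j : ℂ))
    have hsj : ((t / ((r:ℝ) * (k j : ℝ)) : ℝ) : ℂ) = (δ:ℂ) * ((k j : ℂ))⁻¹ := by
      rw [hδ]
      push_cast
      ring
    have hfun : (fun n => (a j : ℂ) • ((t / ((r:ℝ) * (k j : ℝ)) : ℝ) : ℂ) ^ n •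
        coeff n ((uSeries c) ^ (k j)))
        = fun n => ((δ:ℂ)) ^ n • ((a j : ℂ) • ((((k j : ℂ)) ^ n)⁻¹ •
          coeff n ((uSeries c) ^ (k j)))) := by
      funext n
      rw [hsj, mul_pow, ← inv_pow, mul_smul, inv_pow, smul_comm ((a j : ℂ))]
    rw [hfun] at h2
    exact h2
  have hHSM : HasSum (fun n => ((δ:ℂ)) ^ n • (∑ j, (a j : ℂ) • ((((k j : ℂ)) ^ n)⁻¹ •
      coeff n ((uSeries c) ^ (k j)))))
      (∑ j, (a j : ℂ) • (U2 h (t / ((r:ℝ) * (k j : ℝ)))) ^ (k j)) := by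
    have hs := hasSum_sum (fun j (_ : j ∈ (Finset.univ : Finset (Fin m))) => hHSj j)
    have hfun : (fun n => ∑ j, ((δ:ℂ)) ^ n • ((a j : ℂ) • ((((k j : ℂ)) ^ n)⁻¹ •
        coeff n ((uSeries c) ^ (k j)))))
        = fun n => ((δ:ℂ)) ^ n • (∑ j, (a j : ℂ) • ((((k j : ℂ)) ^ n)⁻¹ •
          coeff n ((uSeries c) ^ (k j)))) := by
      funext n
      rw [Finset.smul_sum]
    rwa [hfun] at hs
  have hHSV := hEvE.2 δ
  have hHSD : HasSum (fun n => ((δ:ℂ)) ^ n • W n)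
      ((∑ j, (a j : ℂ) • (U2 h (t / ((r:ℝ) * (k j : ℝ)))) ^ (k j)) -
        NormedSpace.exp ((δ:ℂ) • b)) := by
    have hs := hHSM.sub hHSV
    have hfun : (fun n => ((δ:ℂ)) ^ n • (∑ j, (a j : ℂ) • ((((k j : ℂ)) ^ n)⁻¹ •
        coeff n ((uSeries c) ^ (k j)))) -
        ((δ:ℂ)) ^ n • coeff n (Eser b))
        = fun n => ((δ:ℂ)) ^ n • W n := by
      funext n
      rw [hW]
      simp only
      rw [smul_sub]
    rwa [hfun] at hs
  -- norm bound on the one-step difference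
  have hterm_le : ∀ n : ℕ, ‖((δ:ℂ)) ^ n • W n‖ ≤ (Sa + 1) * (x ^ n / (n.factorial : ℝ)) := by
    intro n
    rw [norm_smul, norm_pow, Complex.norm_real, Real.norm_eq_abs, abs_of_pos hδpos]
    calc δ ^ n * ‖W n‖ ≤ δ ^ n * ((Sa + 1) * (lam ^ n / (n.factorial : ℝ))) :=
          mul_le_mul_of_nonneg_left (hWbound n) (by positivity)
      _ = (Sa + 1) * (x ^ n / (n.factorial : ℝ)) := by
          rw [hxdef, mul_pow]
          ring
  have hgsum : Summable (fun n : ℕ => (Sa + 1) * (x ^ n / (n.factorial : ℝ))) :=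
    (Real.summable_pow_div_factorial x).mul_left _
  have hnormsum : Summable (fun n => ‖((δ:ℂ)) ^ n • W n‖) :=
    Summable.of_nonneg_of_le (fun _ => norm_nonneg _) hterm_le hgsum
  have hMV : ‖(∑ j, (a j : ℂ) • (U2 h (t / ((r:ℝ) * (k j : ℝ)))) ^ (k j)) -
      NormedSpace.exp ((δ:ℂ) • b)‖
      ≤ (Sa + 1) * (x ^ K / (K.factorial : ℝ)) * Real.exp x := by
    rw [← hHSD.tsum_eq]
    calc ‖∑' n, ((δ:ℂ)) ^ n • W n‖ ≤ ∑' n, ‖((δ:ℂ)) ^ n • W n‖ :=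
          norm_tsum_le_tsum_norm hnormsum
      _ = (∑ i ∈ range K, ‖((δ:ℂ)) ^ i • W i‖) + ∑' i, ‖((δ:ℂ)) ^ (i + K) • W (i + K)‖ :=
          (Summable.sum_add_tsum_nat_add K hnormsum).symm
      _ = ∑' i, ‖((δ:ℂ)) ^ (i + K) • W (i + K)‖ := by
          rw [Finset.sum_eq_zero, zero_add]
          intro i hi
          rw [Finset.mem_range, hKdef] at hi
          rw [hWzero i (by omega), smul_zero, norm_zero]
      _ ≤ ∑' i, (Sa + 1) * (x ^ (i + K) / ((i + K).factorial : ℝ)) := by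
          apply Summable.tsum_le_tsum (fun i => hterm_le (i + K))
          · exact (summable_nat_add_iff K).mpr hnormsum
          · exact (summable_nat_add_iff K).mpr hgsum
      _ = (Sa + 1) * ∑' i, x ^ (i + K) / ((i + K).factorial : ℝ) := tsum_mul_left
      _ ≤ (Sa + 1) * (x ^ K / (K.factorial : ℝ) * Real.exp x) :=
          mul_le_mul_of_nonneg_left (tsum_tail_exp_bound x hxpos.le K) (by positivity)
      _ = (Sa + 1) * (x ^ K / (K.factorial : ℝ)) * Real.exp x := by ring
  -- numeric eta
  set η : ℝ := 4 * Sa * (x ^ K / (K.factorial : ℝ)) with hηdef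
  have hηnn : 0 ≤ η := by
    rw [hηdef]
    positivity
  have hMVη : ‖(∑ j, (a j : ℂ) • (U2 h (t / ((r:ℝ) * (k j : ℝ)))) ^ (k j)) -
      NormedSpace.exp ((δ:ℂ) • b)‖ ≤ η := by
    refine le_trans hMV ?_
    rw [hηdef]
    have hcnn : (0:ℝ) ≤ x ^ K / (K.factorial : ℝ) := by positivity
    nlinarith [Real.exp_pos x, hexpx2, hSa1, hcnn,
      mul_le_mul_of_nonneg_left hexpx2 (mul_nonneg (by linarith : (0:ℝ) ≤ Sa + 1) hcnn)]
  -- rpow manipulation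
  have hXpos : (0:ℝ) < 8 * t * lam * Sa / (ε * ((2 * m + 1).factorial : ℝ)) := by positivity
  have hmaxL : t * lam * ((8 * t * lam * Sa / (ε * ((2 * m + 1).factorial : ℝ))) ^
      ((1 : ℝ) / (2 * m))) ≤ (r:ℝ) :=
    le_trans (mul_le_mul_of_nonneg_left (le_max_left _ _) htlam.le) hrbound
  have hZle : (8 * t * lam * Sa / (ε * ((2 * m + 1).factorial : ℝ))) ^ ((1 : ℝ) / (2 * m))
      ≤ (r:ℝ) / (t * lam) := by
    rw [le_div_iff₀ htlam]
    calc (8 * t * lam * Sa / (ε * ((2 * m + 1).factorial : ℝ))) ^ ((1 : ℝ) / (2 * m)) * (t * lam)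
        = t * lam * ((8 * t * lam * Sa / (ε * ((2 * m + 1).factorial : ℝ))) ^
          ((1 : ℝ) / (2 * m))) := by ring
      _ ≤ (r:ℝ) := hmaxL
  have hXle : 8 * t * lam * Sa / (ε * ((2 * m + 1).factorial : ℝ))
      ≤ ((r:ℝ) / (t * lam)) ^ (2 * m) := by
    have h1 := pow_le_pow_left₀ (Real.rpow_nonneg hXpos.le _) hZle (2 * m)
    rwa [← Real.rpow_natCast ((8 * t * lam * Sa / (ε * ((2 * m + 1).factorial : ℝ))) ^
        ((1 : ℝ) / (2 * m))) (2 * m), ← Real.rpow_mul hXpos.le,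
      show (1 : ℝ) / (2 * m) * ((2 * m : ℕ) : ℝ) = 1 by
        push_cast
        field_simp,
      Real.rpow_one] at h1
  have h2 : 8 * (t * lam) * Sa * ((t * lam) / (r:ℝ)) ^ (2 * m)
      ≤ ε * ((2 * m + 1).factorial : ℝ) := by
    have h2a : 8 * t * lam * Sa ≤ ((r:ℝ) / (t * lam)) ^ (2 * m) *
        (ε * ((2 * m + 1).factorial : ℝ)) := by
      rw [div_le_iff₀ (by positivity)] at hXle
      linarith [hXle]
    have hPnn : (0:ℝ) ≤ ((t * lam) / (r:ℝ)) ^ (2 * m) := by positivity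
    have h3 := mul_le_mul_of_nonneg_right h2a hPnn
    have hcancel : ((r:ℝ) / (t * lam)) ^ (2 * m) * ((t * lam) / (r:ℝ)) ^ (2 * m) = 1 := by
      rw [← mul_pow]
      have : (r:ℝ) / (t * lam) * ((t * lam) / (r:ℝ)) = 1 := by
        field_simp
      rw [this, one_pow]
    calc 8 * (t * lam) * Sa * ((t * lam) / (r:ℝ)) ^ (2 * m)
        = 8 * t * lam * Sa * ((t * lam) / (r:ℝ)) ^ (2 * m) := by ring
      _ ≤ ((r:ℝ) / (t * lam)) ^ (2 * m) * (ε * ((2 * m + 1).factorial : ℝ)) *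
          ((t * lam) / (r:ℝ)) ^ (2 * m) := h3
      _ = ((r:ℝ) / (t * lam)) ^ (2 * m) * ((t * lam) / (r:ℝ)) ^ (2 * m) *
          (ε * ((2 * m + 1).factorial : ℝ)) := by ring
      _ = ε * ((2 * m + 1).factorial : ℝ) := by rw [hcancel, one_mul]
  have hrη : (r:ℝ) * η ≤ ε / 2 := by
    have hxuR : x = (t * lam) / (r:ℝ) := by
      rw [hxdef, hδ]
      ring
    have hxK : x ^ K = x ^ (2 * m) * x := by
      rw [hKdef, pow_succ]
    have hru : (r:ℝ) * x = t * lam := by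
      rw [hxuR]
      field_simp
    have hKfact : ((2 * m + 1).factorial : ℝ) = (K.factorial : ℝ) := by rw [hKdef]
    rw [hηdef]
    rw [show (r:ℝ) * (4 * Sa * (x ^ K / (K.factorial : ℝ)))
        = 4 * Sa * (x ^ (2 * m) * ((r:ℝ) * x)) / (K.factorial : ℝ) by
      rw [hxK]; ring]
    rw [hru]
    rw [div_le_div_iff₀ hKfpos (by norm_num : (0:ℝ) < 2)]
    have h2' : 8 * (t * lam) * Sa * x ^ (2 * m) ≤ ε * (K.factorial : ℝ) := by
      rw [← hKfact, hxuR]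
      exact h2
    nlinarith [h2']
  -- norm of the exponential factor
  have hHherm : H.conjTranspose = H := by
    rw [hH, Matrix.conjTranspose_sum]
    exact Finset.sum_congr rfl fun l _ => hherm l
  have hstar : star ((δ:ℂ) • b) = -((δ:ℂ) • b) := by
    rw [hb, smul_smul, Matrix.star_eq_conjTranspose, Matrix.conjTranspose_smul, hHherm,
      ← neg_smul]
    congr 1
    rw [Complex.star_def, map_mul, map_neg, Complex.conj_I, Complex.conj_ofReal]
    ring
  have hV1 : ‖NormedSpace.exp ((δ:ℂ) • b)‖ ≤ 1 := norm_exp_skew _ hstar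
  -- identifying the final exponential
  have hVr : (NormedSpace.exp ((δ:ℂ) • b)) ^ r
      = NormedSpace.exp ((-(t : ℂ) * Complex.I) • H) := by
    let +nondep : NormedAlgebra ℚ (Matrix (Fin d) (Fin d) ℂ) := .restrictScalars ℚ ℂ _
    rw [← NormedSpace.exp_nsmul]
    congr 1
    rw [← Nat.cast_smul_eq_nsmul ℂ, smul_smul, hb, smul_smul]
    congr 1
    have hδc : ((δ:ℝ) : ℂ) = (t:ℂ) / (r:ℂ) := by
      rw [hδ]
      push_cast
      ring
    rw [hδc]
    have hrne : ((r:ℕ) : ℂ) ≠ 0 := Nat.cast_ne_zero.mpr hr.ne'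
    field_simp
  -- final telescoping bound
  have hexphalf : Real.exp (1/2 : ℝ) < 2 := by
    have he1 : Real.exp (1/2 : ℝ) * Real.exp (1/2 : ℝ) = Real.exp 1 := by
      rw [← Real.exp_add]
      norm_num
    nlinarith [Real.exp_one_lt_d9, Real.exp_pos (1/2 : ℝ)]
  have hpow2 : (1 + η) ^ r ≤ 2 := by
    calc (1 + η) ^ r ≤ (Real.exp η) ^ r := by
          apply pow_le_pow_left₀ (by linarith)
          linarith [Real.add_one_le_exp η]
      _ = Real.exp ((r:ℝ) * η) := by rw [← Real.exp_nat_mul]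
      _ ≤ Real.exp (1/2 : ℝ) := Real.exp_le_exp.mpr (by linarith)
      _ ≤ 2 := hexphalf.le
  have htele := pow_sub_pow_norm_le
    (∑ j, (a j : ℂ) • (U2 h (t / ((r:ℝ) * (k j : ℝ)))) ^ (k j))
    (NormedSpace.exp ((δ:ℂ) • b)) η hV1 hMVη hηnn r
  have hsumgeo : (∑ i ∈ range r, (1 + η) ^ i) ≤ (r:ℝ) * (1 + η) ^ r := by
    calc (∑ i ∈ range r, (1 + η) ^ i) ≤ ∑ _i ∈ range r, (1 + η) ^ r := by
          apply Finset.sum_le_sum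
          intro i hi
          exact pow_le_pow_right₀ (by linarith) (le_of_lt (Finset.mem_range.mp hi))
      _ = (r:ℝ) * (1 + η) ^ r := by
          rw [Finset.sum_const, Finset.card_range, nsmul_eq_mul]
  calc ‖(∑ j, ((a j : ℂ) • (U2 h (t / (r * k j))) ^ (k j))) ^ r -
      NormedSpace.exp ((-(t : ℂ) * Complex.I) • H)‖
      = ‖(∑ j, (a j : ℂ) • (U2 h (t / ((r:ℝ) * (k j : ℝ)))) ^ (k j)) ^ r -
        (NormedSpace.exp ((δ:ℂ) • b)) ^ r‖ := by rw [hVr]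
    _ ≤ (∑ i ∈ range r, (1 + η) ^ i) * η := htele
    _ ≤ ((r:ℝ) * (1 + η) ^ r) * η := mul_le_mul_of_nonneg_right hsumgeo hηnn
    _ = ((r:ℝ) * η) * (1 + η) ^ r := by ring
    _ ≤ (ε / 2) * 2 := by
        apply mul_le_mul hrη hpow2 (by positivity) (by linarith)
    _ = ε := by ring
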